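/- Let G be a Banach Lie group with Lie algebra 𝔤 and H ⊆ G a Lie subgroup whose Lie algebra 𝔥 admits a closed complement 𝔨 in 𝔤 (i.e., 𝔤 = 𝔨 ⊕ 𝔥 as topological vector spaces). Then there exists an open neighborhood V of 0 in 𝔨 such that the map μ : V × H → G, (X, y) ↦ exp(X)·y, is injective and a local diffeomorphism at every point of V × H. -/

import Mathlib

open NormedSpace Set

/-- `exp Z` as a unit of the Banach algebra. -/
noncomputable def uexpAux {A : Type*} [NormedRing A] [NormedAlgebra ℝ A] [CompleteSpace A]
    (Z : A) : Aˣ where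
  val := exp Z
  inv := exp (-Z)
  val_inv := by
    letI : NormedAlgebra ℚ A := NormedAlgebra.restrictScalars ℚ ℝ A
    rw [← exp_add_of_commute ((Commute.refl Z).neg_right), add_neg_cancel, exp_zero]
  inv_val := by
    letI : NormedAlgebra ℚ A := NormedAlgebra.restrictScalars ℚ ℝ A
    rw [← exp_add_of_commute ((Commute.refl Z).neg_left), neg_add_cancel, exp_zero]

@[simp] lemma uexpAux_val {A : Type*} [NormedRing A] [NormedAlgebra ℝ A] [CompleteSpace A]
    (Z : A) : (uexpAux Z : A) = exp Z := rfl

@[simp] lemma uexpAux_inv_val {A : Type*} [NormedRing A] [NormedAlgebra ℝ A] [CompleteSpace A]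
    (Z : A) : (((uexpAux Z)⁻¹ : Aˣ) : A) = exp (-Z) := rfl

/-- Let `G` be a Banach Lie group (realized as the unit group of a Banach algebra
`A`, so that `Lie(G) = A`) and `H ⊆ G` a Lie subgroup whose Lie algebra `𝔥`
admits a closed complement `𝔨` in `𝔤 = A`.  Then there is an open neighborhood
`V` of `0` in `𝔨` such that `μ : V × H → G`, `(X, y) ↦ exp(X)·y`, is injective
and a local homeomorphism (local diffeomorphism) at every point. -/
theorem stmt15 {A : Type*} [NormedRing A] [NormedAlgebra ℝ A] [CompleteSpace A]
    (H : Subgroup Aˣ) (𝔥 𝔨 : Submodule ℝ A)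
    -- `𝔥` is the Lie algebra of `H` (via one-parameter subgroups)
    (h𝔥 : (𝔥 : Set A) = {X : A | ∀ t : ℝ, ∃ u ∈ H, (u : A) = NormedSpace.exp (t • X)})
    (h𝔥closed : IsClosed (𝔥 : Set A))
    (h𝔨closed : IsClosed (𝔨 : Set A))
    (hcompl : IsCompl 𝔨 𝔥)
    -- `H` is a Lie subgroup: near `1`, `H` is exactly the exponential of `𝔥`
    (hsub : ∃ U ∈ nhds (0 : A), ∀ X ∈ U,
      (∃ u ∈ H, (u : A) = NormedSpace.exp X) → X ∈ 𝔥) :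
    ∃ V : Set 𝔨, IsOpen V ∧ (0 : 𝔨) ∈ V ∧
      Function.Injective
        (fun p : V × H => NormedSpace.exp ((p.1 : 𝔨) : A) * ((p.2 : Aˣ) : A)) ∧
      IsLocalHomeomorph
        (fun p : V × H => NormedSpace.exp ((p.1 : 𝔨) : A) * ((p.2 : Aˣ) : A)) := by
  classical
  letI : NormedAlgebra ℚ A := NormedAlgebra.restrictScalars ℚ ℝ A
  obtain ⟨U, hU, hUsub⟩ := hsub
  haveI : CompleteSpace 𝔨 := h𝔨closed.completeSpace_coe
  haveI : CompleteSpace 𝔥 := h𝔥closed.completeSpace_coe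
  -- The continuous linear equivalence `𝔨 × 𝔥 ≃ A`.
  set Φ : (𝔨 × 𝔥) ≃L[ℝ] A := 𝔨.prodEquivOfClosedCompl 𝔥 hcompl h𝔨closed h𝔥closed with hΦdef
  have hΦapp : ∀ p : 𝔨 × 𝔥, Φ p = (p.1 : A) + (p.2 : A) := fun p => rfl
  have hΦsymmY : ∀ Y : 𝔥, Φ.symm (Y : A) = (0, Y) := by
    intro Y
    apply Φ.injective
    rw [Φ.apply_symm_apply, hΦapp]
    simp
  -- `exp 𝔥 ⊆ H`.
  have hexp𝔥 : ∀ Y : 𝔥, uexpAux ((Y : 𝔥) : A) ∈ H := by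
    intro Y
    have hY : (Y : A) ∈ (𝔥 : Set A) := Y.2
    rw [h𝔥] at hY
    obtain ⟨u, huH, hu⟩ := hY 1
    have : u = uexpAux ((Y : 𝔥) : A) := Units.ext (by simpa using hu)
    rwa [← this]
  -- Local inverse of `exp` at `0`.
  have hde : HasStrictFDerivAt (exp : A → A)
      ((ContinuousLinearEquiv.refl ℝ A : A ≃L[ℝ] A) : A →L[ℝ] A) 0 := by
    simpa [ContinuousLinearMap.one_def] using hasStrictFDerivAt_exp_zero (𝕂 := ℝ) (𝔸 := A)
  set E : OpenPartialHomeomorph A A := hde.toOpenPartialHomeomorph (exp) with hEdef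
  have hE0 : (0 : A) ∈ E.source := hde.mem_toOpenPartialHomeomorph_source
  have hEcoe : ⇑E = exp := rfl
  -- The product map `φ` and its local inverse at `(0,0)`.
  set φ : 𝔨 × 𝔥 → A := fun p => exp (p.1 : A) * exp (p.2 : A) with hφdef
  have h1 : HasStrictFDerivAt (fun p : 𝔨 × 𝔥 => exp (p.1 : A))
      (𝔨.subtypeL.comp (ContinuousLinearMap.fst ℝ 𝔨 𝔥)) (0, 0) := by
    have := (hasStrictFDerivAt_exp_zero (𝕂 := ℝ) (𝔸 := A)).comp ((0,0) : 𝔨 × 𝔥)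
      ((𝔨.subtypeL.comp (ContinuousLinearMap.fst ℝ 𝔨 𝔥)).hasStrictFDerivAt (x := ((0,0) : 𝔨 × 𝔥)))
    simpa [ContinuousLinearMap.one_def] using this
  have h2 : HasStrictFDerivAt (fun p : 𝔨 × 𝔥 => exp (p.2 : A))
      (𝔥.subtypeL.comp (ContinuousLinearMap.snd ℝ 𝔨 𝔥)) (0, 0) := by
    have := (hasStrictFDerivAt_exp_zero (𝕂 := ℝ) (𝔸 := A)).comp ((0,0) : 𝔨 × 𝔥)
      ((𝔥.subtypeL.comp (ContinuousLinearMap.snd ℝ 𝔨 𝔥)).hasStrictFDerivAt (x := ((0,0) : 𝔨 × 𝔥)))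
    simpa [ContinuousLinearMap.one_def] using this
  have hdφ : HasStrictFDerivAt φ (Φ : (𝔨 × 𝔥) →L[ℝ] A) ((0,0) : 𝔨 × 𝔥) := by
    have hmul := h1.mul' h2
    have heq : (Φ : (𝔨 × 𝔥) →L[ℝ] A) =
        (exp (((0,0) : 𝔨 × 𝔥).1 : A)) • (𝔥.subtypeL.comp (ContinuousLinearMap.snd ℝ 𝔨 𝔥)) +
          (𝔨.subtypeL.comp (ContinuousLinearMap.fst ℝ 𝔨 𝔥)).smulRight
            (exp (((0,0) : 𝔨 × 𝔥).2 : A)) := by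
      refine ContinuousLinearMap.ext fun p => ?_
      have := hΦapp p
      simp only [ContinuousLinearEquiv.coe_coe] at *
      simp [this, exp_zero, add_comm]
    rw [heq]
    exact hmul
  set e : OpenPartialHomeomorph (𝔨 × 𝔥) A := hdφ.toOpenPartialHomeomorph φ with hedef
  have he0 : ((0,0) : 𝔨 × 𝔥) ∈ e.source := hdφ.mem_toOpenPartialHomeomorph_source
  have hecoe : ⇑e = φ := rfl
  -- A product neighborhood inside `e.source`.
  obtain ⟨V₂, W₂, hV₂o, hW₂o, hV₂0, hW₂0, hVW⟩ :=
    isOpen_prod_iff.mp e.open_source 0 0 he0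
  obtain ⟨O, hOo, hOW⟩ := isOpen_induced_iff.mp hW₂o
  have hO0 : (0 : A) ∈ O := by
    have h0 : (0 : 𝔥) ∈ ((Subtype.val : 𝔥 → A) ⁻¹' O) := by rw [hOW]; exact hW₂0
    simpa using h0
  -- The small neighborhood `T` of `0` in `A`.
  set T : Set A := interior U ∩ E.source ∩ O with hTdef
  have hTo : IsOpen T := ((isOpen_interior.inter E.open_source).inter hOo)
  have hT0 : (0 : A) ∈ T := ⟨⟨mem_interior_iff_mem_nhds.mpr hU, hE0⟩, hO0⟩
  have hTE : T ⊆ E.source := fun z hz => hz.1.2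
  have hTU : T ⊆ U := fun z hz => interior_subset hz.1.1
  have hTO : T ⊆ O := fun z hz => hz.2
  have hexpT : IsOpen (exp '' T) := by
    have := E.isOpen_image_of_subset_source hTo hTE
    rwa [hEcoe] at this
  have hexpTtarget : exp '' T ⊆ E.target := by
    rintro _ ⟨Z, hZT, rfl⟩
    exact E.map_source (hTE hZT)
  have h1T : (1 : A) ∈ exp '' T := ⟨0, hT0, exp_zero⟩
  -- The injectivity neighborhood.
  have hcontinj : Continuous (fun q : 𝔨 × 𝔨 => exp (-(q.2 : A)) * exp (q.1 : A)) := by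
    exact ((exp_continuous.comp (continuous_subtype_val.comp continuous_snd).neg).mul
      (exp_continuous.comp (continuous_subtype_val.comp continuous_fst)))
  have hpre : (fun q : 𝔨 × 𝔨 => exp (-(q.2 : A)) * exp (q.1 : A)) ⁻¹' (exp '' T)
      ∈ nhds ((0, 0) : 𝔨 × 𝔨) := by
    refine hcontinj.continuousAt.preimage_mem_nhds (hexpT.mem_nhds ?_)
    simpa [exp_zero] using h1T
  obtain ⟨V₁, hV₁, V₁', hV₁', hVsub⟩ := mem_nhds_prod_iff.mp hpre
  -- The final neighborhood `V`.
  set V : Set 𝔨 := interior V₁ ∩ interior V₁' ∩ V₂ with hVdef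
  have hVopen : IsOpen V := (isOpen_interior.inter isOpen_interior).inter hV₂o
  have hV0 : (0 : 𝔨) ∈ V :=
    ⟨⟨mem_interior_iff_mem_nhds.mpr hV₁, mem_interior_iff_mem_nhds.mpr hV₁'⟩, hV₂0⟩
  have hVV₁ : V ⊆ V₁ := fun x hx => interior_subset hx.1.1
  have hVV₁' : V ⊆ V₁' := fun x hx => interior_subset hx.1.2
  have hVV₂ : V ⊆ V₂ := fun x hx => hx.2
  refine ⟨V, hVopen, hV0, ?_, ?_⟩
  · -- Injectivity
    intro p q hpq
    simp only at hpq
    have hu : uexpAux ((p.1 : 𝔨) : A) * (p.2 : Aˣ) = uexpAux ((q.1 : 𝔨) : A) * (q.2 : Aˣ) :=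
      Units.ext (by simpa [Units.val_mul] using hpq)
    have hstep : (uexpAux ((q.1 : 𝔨) : A))⁻¹ * uexpAux ((p.1 : 𝔨) : A) * (p.2 : Aˣ)
        = (q.2 : Aˣ) := by
      rw [mul_assoc, hu, inv_mul_cancel_left]
    have h1' : (uexpAux ((q.1 : 𝔨) : A))⁻¹ * uexpAux ((p.1 : 𝔨) : A)
        = (q.2 : Aˣ) * ((p.2 : Aˣ))⁻¹ := eq_mul_inv_iff_mul_eq.mpr hstep
    have hz : exp (-((q.1 : 𝔨) : A)) * exp ((p.1 : 𝔨) : A)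
        = (((q.2 : Aˣ) * ((p.2 : Aˣ))⁻¹ : Aˣ) : A) := by
      rw [← h1']
      simp [Units.val_mul]
    have hmem : ((p.1 : 𝔨), (q.1 : 𝔨)) ∈
        (fun w : 𝔨 × 𝔨 => exp (-(w.2 : A)) * exp (w.1 : A)) ⁻¹' (exp '' T) :=
      hVsub (Set.mk_mem_prod (hVV₁ p.1.2) (hVV₁' q.1.2))
    rw [Set.mem_preimage] at hmem
    obtain ⟨Z, hZT, hZ⟩ := hmem
    have hZ𝔥 : Z ∈ 𝔥 := by
      refine hUsub Z (hTU hZT) ⟨(q.2 : Aˣ) * ((p.2 : Aˣ))⁻¹,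
        H.mul_mem q.2.2 (H.inv_mem p.2.2), ?_⟩
      rw [← hz, ← hZ]
    have hcancel : exp (((q.1 : 𝔨)) : A) * exp (-(((q.1 : 𝔨)) : A)) = 1 :=
      (uexpAux (((q.1 : 𝔨)) : A)).val_inv
    have hfeq : φ ((p.1 : 𝔨), (0 : 𝔥)) = φ ((q.1 : 𝔨), (⟨Z, hZ𝔥⟩ : 𝔥)) := by
      show exp ((p.1 : 𝔨) : A) * exp ((0 : 𝔥) : A)
          = exp ((q.1 : 𝔨) : A) * exp Z
      rw [hZ, ← mul_assoc, hcancel]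
      simp [exp_zero]
    have e1 : (((p.1 : 𝔨)), (0 : 𝔥)) ∈ e.source := hVW ⟨hVV₂ p.1.2, hW₂0⟩
    have e2 : (((q.1 : 𝔨)), (⟨Z, hZ𝔥⟩ : 𝔥)) ∈ e.source := by
      refine hVW ⟨hVV₂ q.1.2, ?_⟩
      have : (⟨Z, hZ𝔥⟩ : 𝔥) ∈ Subtype.val ⁻¹' O := hTO hZT
      rwa [hOW] at this
    have hinj := e.injOn e1 e2 (by rw [hecoe]; exact hfeq)
    have hfst : ((p.1 : 𝔨)) = ((q.1 : 𝔨)) := congrArg Prod.fst hinj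
    have hsnd : ((0 : 𝔥)) = (⟨Z, hZ𝔥⟩ : 𝔥) := congrArg Prod.snd hinj
    have hZ0 : Z = 0 := by
      have := congrArg Subtype.val hsnd
      exact this.symm
    have hunits : (q.2 : Aˣ) * ((p.2 : Aˣ))⁻¹ = 1 := by
      apply Units.ext
      rw [← hz, ← hZ, hZ0, exp_zero, Units.val_one]
    have hy : (p.2 : Aˣ) = (q.2 : Aˣ) := (mul_inv_eq_one.mp hunits).symm
    exact Prod.ext (Subtype.ext hfst) (Subtype.ext hy)
  · -- Local homeomorphism
    apply IsLocalHomeomorph.mk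
    rintro ⟨x₀, y₀⟩
    -- right translation by `y₀`
    let R : A ≃ₜ A :=
      { toFun := fun z => z * ((y₀ : Aˣ) : A)
        invFun := fun z => z * ((((y₀ : Aˣ))⁻¹ : Aˣ) : A)
        left_inv := fun z => Units.mul_inv_cancel_right z _
        right_inv := fun z => Units.inv_mul_cancel_right z _
        continuous_toFun := continuous_mul_right _
        continuous_invFun := continuous_mul_right _ }
    let zmap : V × H → A := fun p => ((p.2 : Aˣ) : A) * ((((y₀ : Aˣ))⁻¹ : Aˣ) : A)
    have hzmap_cont : Continuous zmap :=
      (Units.continuous_val.comp (continuous_subtype_val.comp continuous_snd)).mul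
        continuous_const
    have hsrc : ∀ p : V × H, zmap p ∈ exp '' T →
        ∃ Z : A, Z ∈ T ∧ (Z ∈ 𝔥) ∧ exp Z = zmap p ∧ E.symm (zmap p) = Z := by
      intro p hp
      obtain ⟨Z, hZT, hZ⟩ := hp
      have hZ𝔥 : Z ∈ 𝔥 := by
        refine hUsub Z (hTU hZT) ⟨(p.2 : Aˣ) * ((y₀ : Aˣ))⁻¹,
          H.mul_mem p.2.2 (H.inv_mem y₀.2), (Units.val_mul _ _).trans hZ.symm⟩
      have hsymm : E.symm (zmap p) = Z := by
        rw [← hZ]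
        exact E.left_inv (hTE hZT)
      exact ⟨Z, hZT, hZ𝔥, hZ, hsymm⟩
    -- the chart on the domain
    let c : OpenPartialHomeomorph (V × H) (𝔨 × 𝔥) :=
      { toFun := fun p => ((p.1 : 𝔨), (Φ.symm (E.symm (zmap p))).2)
        invFun := fun q => ((if h : q.1 ∈ V then (⟨q.1, h⟩ : V) else ⟨(0 : 𝔨), hV0⟩),
          (⟨uexpAux ((q.2 : 𝔥) : A) * (y₀ : Aˣ), H.mul_mem (hexp𝔥 q.2) y₀.2⟩ : H))
        source := {p | zmap p ∈ exp '' T}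
        target := {q | q.1 ∈ V ∧ ((q.2 : 𝔥) : A) ∈ T}
        map_source' := by
          intro p hp
          obtain ⟨Z, hZT, hZ𝔥, hZ, hsymm⟩ := hsrc p hp
          refine ⟨p.1.2, ?_⟩
          show ((Φ.symm (E.symm (zmap p))).2 : A) ∈ T
          have hY := hΦsymmY ⟨Z, hZ𝔥⟩
          rw [hsymm]
          rw [show ((⟨Z, hZ𝔥⟩ : 𝔥) : A) = Z from rfl] at hY
          rw [hY]
          exact hZT
        map_target' := by
          intro q hq
          have hzeq : zmap ((if h : q.1 ∈ V then (⟨q.1, h⟩ : V) else ⟨(0 : 𝔨), hV0⟩),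
              (⟨uexpAux ((q.2 : 𝔥) : A) * (y₀ : Aˣ), H.mul_mem (hexp𝔥 q.2) y₀.2⟩ : H))
              = exp ((q.2 : 𝔥) : A) := by
            show (((uexpAux ((q.2 : 𝔥) : A) * (y₀ : Aˣ) : Aˣ)) : A)
                * ((((y₀ : Aˣ))⁻¹ : Aˣ) : A) = _
            rw [Units.val_mul, Units.mul_inv_cancel_right, uexpAux_val]
          show zmap _ ∈ exp '' T
          rw [hzeq]
          exact ⟨(q.2 : 𝔥), hq.2, rfl⟩
        left_inv' := by
          intro p hp
          obtain ⟨Z, hZT, hZ𝔥, hZ, hsymm⟩ := hsrc p hp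
          have hY := hΦsymmY ⟨Z, hZ𝔥⟩
          rw [show ((⟨Z, hZ𝔥⟩ : 𝔥) : A) = Z from rfl] at hY
          have hsnd : (Φ.symm (E.symm (zmap p))).2 = (⟨Z, hZ𝔥⟩ : 𝔥) := by
            rw [hsymm, hY]
          refine Prod.ext ?_ ?_
          · show (if h : ((p.1 : 𝔨)) ∈ V then (⟨(p.1 : 𝔨), h⟩ : V) else ⟨(0 : 𝔨), hV0⟩) = p.1
            rw [dif_pos p.1.2]
          · apply Subtype.ext
            apply Units.ext
            show ((uexpAux (((Φ.symm (E.symm (zmap p))).2 : 𝔥) : A) * (y₀ : Aˣ) : Aˣ) : A)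
                = ((p.2 : Aˣ) : A)
            rw [hsnd]
            rw [show (((⟨Z, hZ𝔥⟩ : 𝔥) : 𝔥) : A) = Z from rfl]
            rw [Units.val_mul, uexpAux_val, hZ]
            show ((p.2 : Aˣ) : A) * ((((y₀ : Aˣ))⁻¹ : Aˣ) : A) * ((y₀ : Aˣ) : A) = _
            exact Units.inv_mul_cancel_right _ _
        right_inv' := by
          intro q hq
          have hzeq : zmap ((if h : q.1 ∈ V then (⟨q.1, h⟩ : V) else ⟨(0 : 𝔨), hV0⟩),
              (⟨uexpAux ((q.2 : 𝔥) : A) * (y₀ : Aˣ), H.mul_mem (hexp𝔥 q.2) y₀.2⟩ : H))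
              = exp ((q.2 : 𝔥) : A) := by
            show (((uexpAux ((q.2 : 𝔥) : A) * (y₀ : Aˣ) : Aˣ)) : A)
                * ((((y₀ : Aˣ))⁻¹ : Aˣ) : A) = _
            rw [Units.val_mul, Units.mul_inv_cancel_right, uexpAux_val]
          refine Prod.ext ?_ ?_
          · show ((((if h : q.1 ∈ V then (⟨q.1, h⟩ : V) else (⟨(0 : 𝔨), hV0⟩ : V)) : V) : 𝔨)) = q.1
            rw [dif_pos hq.1]
          · show (Φ.symm (E.symm (zmap _))).2 = q.2
            rw [hzeq]
            rw [show E.symm (exp ((q.2 : 𝔥) : A)) = ((q.2 : 𝔥) : A) from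
              E.left_inv (hTE hq.2)]
            rw [hΦsymmY q.2]
        open_source := hexpT.preimage hzmap_cont
        open_target := (hVopen.preimage continuous_fst).inter
          (hTo.preimage (continuous_subtype_val.comp continuous_snd))
        continuousOn_toFun := by
          apply ContinuousOn.prodMk
          · exact (continuous_subtype_val.comp continuous_fst).continuousOn
          · have h1' : ContinuousOn (fun p : V × H => E.symm (zmap p))
                {p : V × H | zmap p ∈ exp '' T} := by
              refine E.continuousOn_symm.comp hzmap_cont.continuousOn ?_
              intro p hp
              exact hexpTtarget hp
            exact (continuous_snd.comp Φ.symm.continuous).comp_continuousOn h1'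
        continuousOn_invFun := by
          apply ContinuousOn.prodMk
          · rw [Topology.IsEmbedding.subtypeVal.continuousOn_iff]
            refine (continuous_fst.continuousOn).congr ?_
            intro q hq
            show ((((if h : q.1 ∈ V then (⟨q.1, h⟩ : V) else (⟨(0 : 𝔨), hV0⟩ : V)) : V) : 𝔨)) = q.1
            rw [dif_pos hq.1]
          · apply Continuous.continuousOn
            apply Continuous.subtype_mk
            refine Units.continuous_iff.mpr ⟨?_, ?_⟩
            · show Continuous fun q : 𝔨 × 𝔥 => exp ((q.2 : 𝔥) : A) * ((y₀ : Aˣ) : A)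
              exact (exp_continuous.comp (continuous_subtype_val.comp continuous_snd)).mul
                continuous_const
            · show Continuous fun q : 𝔨 × 𝔥 =>
                ((((y₀ : Aˣ))⁻¹ : Aˣ) : A) * exp (-((q.2 : 𝔥) : A))
              exact continuous_const.mul
                (exp_continuous.comp (continuous_subtype_val.comp continuous_snd).neg) }
    refine ⟨c.trans (e.trans R.toOpenPartialHomeomorph), ?_, ?_⟩
    · rw [OpenPartialHomeomorph.trans_source]
      have hz1 : zmap (x₀, y₀) = exp (0 : A) := by
        show ((y₀ : Aˣ) : A) * ((((y₀ : Aˣ))⁻¹ : Aˣ) : A) = _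
        rw [exp_zero, Units.mul_inv]
      constructor
      · show zmap (x₀, y₀) ∈ exp '' T
        rw [hz1]
        exact ⟨0, hT0, rfl⟩
      · show c (x₀, y₀) ∈ (e.trans R.toOpenPartialHomeomorph).source
        have hc0 : c (x₀, y₀) = ((x₀ : 𝔨), (0 : 𝔥)) := by
          show (((x₀ : 𝔨)), (Φ.symm (E.symm (zmap (x₀, y₀)))).2) = _
          rw [hz1]
          rw [show E.symm (exp (0 : A)) = (0 : A) from E.left_inv hE0]
          rw [map_zero, Prod.snd_zero]
        rw [OpenPartialHomeomorph.trans_source]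
        refine ⟨?_, ?_⟩
        · rw [hc0]; exact hVW ⟨hVV₂ x₀.2, hW₂0⟩
        · simp
    · intro p hp
      rw [OpenPartialHomeomorph.trans_source] at hp
      obtain ⟨hp1, _⟩ := hp
      obtain ⟨Z, hZT, hZ𝔥, hZ, hsymm⟩ := hsrc p hp1
      have hY := hΦsymmY ⟨Z, hZ𝔥⟩
      rw [show ((⟨Z, hZ𝔥⟩ : 𝔥) : A) = Z from rfl] at hY
      show exp ((p.1 : 𝔨) : A) * ((p.2 : Aˣ) : A)
          = (c.trans (e.trans R.toOpenPartialHomeomorph)) p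
      rw [OpenPartialHomeomorph.coe_trans, OpenPartialHomeomorph.coe_trans]
      show _ = R (e (c p))
      have hcp : c p = ((p.1 : 𝔨), (⟨Z, hZ𝔥⟩ : 𝔥)) := by
        show (((p.1 : 𝔨)), (Φ.symm (E.symm (zmap p))).2) = _
        rw [hsymm, hY]
      rw [hcp]
      show _ = (exp ((p.1 : 𝔨) : A) * exp Z) * ((y₀ : Aˣ) : A)
      rw [hZ]
      show exp ((p.1 : 𝔨) : A) * ((p.2 : Aˣ) : A)
          = exp ((p.1 : 𝔨) : A) * (((p.2 : Aˣ) : A) * ((((y₀ : Aˣ))⁻¹ : Aˣ) : A))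
            * ((y₀ : Aˣ) : A)
      rw [mul_assoc, Units.inv_mul_cancel_right]
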